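/- Let (E, ℰ) be a measurable space, let 0 < κ ≤ 1, and let g : E → ℝ be a measurable function with κ ≤ g(x) ≤ κ⁻¹ for all x. For a probability measure μ on E, define the Bayes update Lμ by (Lμ)(f) := (∫ f g dμ) / (∫ g dμ) for bounded measurable f. Then for all probability measures μ, ν on E and every measurable f : E → ℝ with sup_x |f(x)| ≤ 1, one has |(Lμ)(f) − (Lν)(f)| ≤ 2 κ⁻² · D(μ, ν), where D(μ, ν) := sup over measurable h with sup|h| ≤ 1 of |∫ h dμ − ∫ h dν|. -/
import Mathlib


open MeasureTheory

/-- The total-variation-type distance between two measures: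
`D(μ, ν) = sup { |∫ f dμ − ∫ f dν| : f measurable, sup |f| ≤ 1 }`. -/
noncomputable def tvDist {E : Type*} [MeasurableSpace E] (μ ν : Measure E) : ℝ :=
  sSup {r : ℝ | ∃ f : E → ℝ, Measurable f ∧ (∀ x, |f x| ≤ 1) ∧
    r = |∫ x, f x ∂μ - ∫ x, f x ∂ν|}

/-- Lipschitz bound for the Bayesian update step of the particle filter: if the likelihood `g`
satisfies `κ ≤ g ≤ κ⁻¹` with `0 < κ ≤ 1`, then for every measurable `f` bounded by `1`,
`|(Lμ)(f) − (Lν)(f)| ≤ 2 κ⁻² D(μ, ν)`, where `(Lμ)(f) = (∫ f g dμ) / (∫ g dμ)`. -/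
theorem bayes_update_lipschitz
    {E : Type*} [MeasurableSpace E]
    (κ : ℝ) (hκ0 : 0 < κ) (hκ1 : κ ≤ 1)
    (g : E → ℝ) (hg : Measurable g) (hgl : ∀ x, κ ≤ g x) (hgu : ∀ x, g x ≤ κ⁻¹)
    (μ ν : Measure E) [IsProbabilityMeasure μ] [IsProbabilityMeasure ν]
    (f : E → ℝ) (hf : Measurable f) (hfb : ∀ x, |f x| ≤ 1) :
    |(∫ x, f x * g x ∂μ) / (∫ x, g x ∂μ) - (∫ x, f x * g x ∂ν) / (∫ x, g x ∂ν)| ≤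
      2 * κ⁻¹ ^ 2 * tvDist μ ν := by
  have hκinv : (0:ℝ) < κ⁻¹ := inv_pos.mpr hκ0
  have hgpos : ∀ x, 0 < g x := fun x => lt_of_lt_of_le hκ0 (hgl x)
  -- boundedness facts
  have hgnorm : ∀ x, ‖g x‖ ≤ κ⁻¹ := fun x => by
    rw [Real.norm_eq_abs, abs_of_pos (hgpos x)]; exact hgu x
  have hfgnorm : ∀ x, ‖f x * g x‖ ≤ κ⁻¹ := fun x => by
    rw [Real.norm_eq_abs, abs_mul, abs_of_pos (hgpos x)]
    calc |f x| * g x ≤ 1 * κ⁻¹ :=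
          mul_le_mul (hfb x) (hgu x) (le_of_lt (hgpos x)) zero_le_one
      _ = κ⁻¹ := one_mul _
  -- integrability
  have integ : ∀ (m : Measure E) [IsProbabilityMeasure m] (h : E → ℝ), Measurable h →
      (∀ x, ‖h x‖ ≤ κ⁻¹) → Integrable h m := by
    intro m _ h hm hb
    exact ⟨hm.aestronglyMeasurable, HasFiniteIntegral.of_bounded (ae_of_all _ hb)⟩
  have hgμ := integ μ g hg hgnorm
  have hgν := integ ν g hg hgnorm
  have hfgμ := integ μ (fun x => f x * g x) (hf.mul hg) hfgnorm
  have hfgν := integ ν (fun x => f x * g x) (hf.mul hg) hfgnorm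
  set A := ∫ x, f x * g x ∂μ with hA
  set A' := ∫ x, f x * g x ∂ν with hA'
  set B := ∫ x, g x ∂μ with hB
  set B' := ∫ x, g x ∂ν with hB'
  have hBκ : κ ≤ B := by
    have : ∫ _x, κ ∂μ ≤ B := integral_mono (integrable_const κ) hgμ hgl
    simpa using this
  have hB'κ : κ ≤ B' := by
    have : ∫ _x, κ ∂ν ≤ B' := integral_mono (integrable_const κ) hgν hgl
    simpa using this
  have hBpos : 0 < B := lt_of_lt_of_le hκ0 hBκ
  have hB'pos : 0 < B' := lt_of_lt_of_le hκ0 hB'κ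
  have hAle : |A'| ≤ B' := by
    calc |A'| ≤ ∫ x, |f x * g x| ∂ν := by
          simpa only [Real.norm_eq_abs] using
            norm_integral_le_integral_norm (μ := ν) (fun x => f x * g x)
      _ ≤ ∫ x, g x ∂ν := by
          apply integral_mono hfgν.abs hgν
          intro x
          show |f x * g x| ≤ g x
          rw [abs_mul, abs_of_pos (hgpos x)]
          calc |f x| * g x ≤ 1 * g x :=
              mul_le_mul_of_nonneg_right (hfb x) (le_of_lt (hgpos x))
            _ = g x := one_mul _
  -- tvDist bounds
  have hDle : ∀ (h : E → ℝ), Measurable h → (∀ x, |h x| ≤ 1) →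
      |∫ x, h x ∂μ - ∫ x, h x ∂ν| ≤ tvDist μ ν := by
    intro h hm hb
    apply le_csSup
    · refine ⟨2, ?_⟩
      rintro r ⟨p, hp, hpb, rfl⟩
      have h1 : |∫ x, p x ∂μ| ≤ 1 := by
        have := norm_integral_le_of_norm_le_const (μ := μ) (C := 1) (f := p)
          (ae_of_all _ (fun x => by simpa using hpb x))
        simpa using this
      have h2 : |∫ x, p x ∂ν| ≤ 1 := by
        have := norm_integral_le_of_norm_le_const (μ := ν) (C := 1) (f := p)
          (ae_of_all _ (fun x => by simpa using hpb x))
        simpa using this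
      calc |∫ x, p x ∂μ - ∫ x, p x ∂ν| ≤ |∫ x, p x ∂μ| + |∫ x, p x ∂ν| := abs_sub _ _
        _ ≤ 2 := by linarith
    · exact ⟨h, hm, hb, rfl⟩
  have hAA' : |A - A'| ≤ κ⁻¹ * tvDist μ ν := by
    have key := hDle (fun x => κ * (f x * g x)) (measurable_const.mul (hf.mul hg))
      (fun x => by
        rw [abs_mul, abs_of_pos hκ0]
        calc κ * |f x * g x| ≤ κ * κ⁻¹ :=
            mul_le_mul_of_nonneg_left (hfgnorm x) (le_of_lt hκ0)
          _ = 1 := mul_inv_cancel₀ (ne_of_gt hκ0))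
    rw [integral_const_mul, integral_const_mul, ← mul_sub, abs_mul, abs_of_pos hκ0] at key
    calc |A - A'| = κ⁻¹ * (κ * |A - A'|) := by
          field_simp
      _ ≤ κ⁻¹ * tvDist μ ν := mul_le_mul_of_nonneg_left key (le_of_lt hκinv)
  have hBB' : |B' - B| ≤ κ⁻¹ * tvDist μ ν := by
    have key := hDle (fun x => κ * g x) (measurable_const.mul hg)
      (fun x => by
        rw [abs_mul, abs_of_pos hκ0, abs_of_pos (hgpos x)]
        calc κ * g x ≤ κ * κ⁻¹ :=
            mul_le_mul_of_nonneg_left (hgu x) (le_of_lt hκ0)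
          _ = 1 := mul_inv_cancel₀ (ne_of_gt hκ0))
    rw [integral_const_mul, integral_const_mul, ← mul_sub, abs_mul, abs_of_pos hκ0] at key
    rw [abs_sub_comm]
    calc |B - B'| = κ⁻¹ * (κ * |B - B'|) := by field_simp
      _ ≤ κ⁻¹ * tvDist μ ν := mul_le_mul_of_nonneg_left key (le_of_lt hκinv)
  have hsplit : A / B - A' / B' = (A - A') / B + (A' / B') * ((B' - B) / B) := by
    field_simp
    ring
  rw [hsplit]
  have hAB' : |A' / B'| ≤ 1 := by
    rw [abs_div, abs_of_pos hB'pos]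
    exact div_le_one_of_le₀ hAle (le_of_lt hB'pos)
  have hinvB : B⁻¹ ≤ κ⁻¹ := by
    apply inv_anti₀ hκ0 hBκ
  have t1 : |(A - A') / B| ≤ κ⁻¹ * (κ⁻¹ * tvDist μ ν) := by
    rw [abs_div, abs_of_pos hBpos, div_eq_mul_inv, mul_comm]
    have h0 : 0 ≤ |A - A'| := abs_nonneg _
    calc B⁻¹ * |A - A'| ≤ κ⁻¹ * |A - A'| := mul_le_mul_of_nonneg_right hinvB h0
      _ ≤ κ⁻¹ * (κ⁻¹ * tvDist μ ν) := mul_le_mul_of_nonneg_left hAA' (le_of_lt hκinv)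
  have t2 : |(A' / B') * ((B' - B) / B)| ≤ κ⁻¹ * (κ⁻¹ * tvDist μ ν) := by
    rw [abs_mul, show |(B' - B) / B| = |B' - B| * B⁻¹ by
      rw [abs_div, abs_of_pos hBpos, div_eq_mul_inv]]
    calc |A' / B'| * (|B' - B| * B⁻¹) ≤ 1 * (|B' - B| * B⁻¹) :=
          mul_le_mul_of_nonneg_right hAB' (by positivity)
      _ = B⁻¹ * |B' - B| := by ring
      _ ≤ κ⁻¹ * |B' - B| := mul_le_mul_of_nonneg_right hinvB (abs_nonneg _)
      _ ≤ κ⁻¹ * (κ⁻¹ * tvDist μ ν) := mul_le_mul_of_nonneg_left hBB' (le_of_lt hκinv)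
  calc |(A - A') / B + (A' / B') * ((B' - B) / B)|
      ≤ |(A - A') / B| + |(A' / B') * ((B' - B) / B)| := abs_add_le _ _
    _ ≤ κ⁻¹ * (κ⁻¹ * tvDist μ ν) + κ⁻¹ * (κ⁻¹ * tvDist μ ν) := add_le_add t1 t2
    _ = 2 * κ⁻¹ ^ 2 * tvDist μ ν := by ring
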